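/- Let S be a semigroup for which there exists a group G and an injective semigroup homomorphism φ : S → G such that every element of G can be written as φ(s)⁻¹·φ(t) with s, t ∈ S. Then S is cancellative and Ss ∩ St ≠ ∅ for every pair s, t ∈ S; that is, S is an Ore semigroup. -/
import Mathlib

/-- **Converse of Ore's theorem.**
If a semigroup `S` admits an injective semigroup homomorphism `φ : S → G` into
a group `G` such that every element of `G` has the form `(φ s)⁻¹ * φ t` with
`s t ∈ S`, then `S` is cancellative and `Ss ∩ St ≠ ∅` for every `s t ∈ S`;
that is, `S` is an Ore semigroup. -/
theorem enveloping_group_implies_ore {S : Type u} [Semigroup S]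
    {G : Type v} [Group G] (φ : S → G)
    (hhom : ∀ s t : S, φ (s * t) = φ s * φ t)
    (hinj : Function.Injective φ)
    (hgen : ∀ g : G, ∃ s t : S, g = (φ s)⁻¹ * φ t) :
    (∀ a b c : S, a * b = a * c → b = c) ∧
    (∀ a b c : S, b * a = c * a → b = c) ∧
    (∀ s t : S, ∃ u v : S, u * s = v * t) := by
  refine ⟨?_, ?_, ?_⟩
  · intro a b c h
    apply hinj
    have := congrArg φ h
    rw [hhom, hhom] at this
    exact mul_left_cancel this
  · intro a b c h
    apply hinj
    have := congrArg φ h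
    rw [hhom, hhom] at this
    exact mul_right_cancel this
  · intro s t
    obtain ⟨u, v, huv⟩ := hgen (φ s * (φ t)⁻¹)
    refine ⟨u, v, hinj ?_⟩
    rw [hhom, hhom]
    have : φ u * (φ s * (φ t)⁻¹) = φ v := by
      rw [huv, ← mul_assoc, mul_inv_cancel, one_mul]
    calc φ u * φ s = φ v * φ t := by
          rw [← this]; group
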